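/- arXiv:2407.15517 — 3 statements merged into one kernel-verified Lean document; each statement's English description precedes it below -/
import Mathlib

section
/- There exists a universal constant C > 0 such that for all θ > 0, all λ ∈ ℂ, and all continuously differentiable functions v_r, v_φ : [0,θ] → ℂ satisfying v_φ'(φ) = −(λ+1)·v_r(φ) for all φ ∈ [0,θ], one has, for each ϑ ∈ {0,θ}: |v_φ(ϑ)|² ≤ C·(θ^{−1} + |λ+1|)·∫₀^θ (|v_r(φ)|² + |v_φ(φ)|²) dφ. -/
open MeasureTheory

/-- Trace-type estimate for the Mellin transform of a divergence-free vector field on a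
wedge of opening angle `θ`: if `v_φ' = −(λ+1)v_r` on `[0,θ]`, then the boundary values of
`v_φ` are controlled by `(θ⁻¹ + |λ+1|)` times the `L²` norm of `(v_r, v_φ)`. -/
theorem mellin_trace_estimate :
    ∃ C : ℝ, 0 < C ∧ ∀ θ : ℝ, 0 < θ → ∀ lam : ℂ, ∀ vr vφ : ℝ → ℂ,
      ContDiff ℝ 1 vr → ContDiff ℝ 1 vφ →
      (∀ φ ∈ Set.Icc (0:ℝ) θ, deriv vφ φ = -(lam + 1) * vr φ) →
      ∀ ϑ ∈ ({0, θ} : Set ℝ),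
        ‖vφ ϑ‖^2 ≤
          C * (θ⁻¹ + ‖lam + 1‖) *
            ∫ φ in (0:ℝ)..θ, (‖vr φ‖^2 + ‖vφ φ‖^2) := by
  refine ⟨1, one_pos, ?_⟩
  intro θ hθ lam vr vφ hvr hvφ hdiv ϑ hϑ
  set a : ℝ := ‖lam + 1‖ with ha
  have ha0 : 0 ≤ a := norm_nonneg _
  set F : ℝ → ℝ := fun x => ‖vr x‖ ^ 2 + ‖vφ x‖ ^ 2 with hF
  have hFc : Continuous F := by
    exact ((hvr.continuous.norm.pow 2).add (hvφ.continuous.norm.pow 2))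
  have hFnn : ∀ x, 0 ≤ F x := fun x => add_nonneg (by positivity) (by positivity)
  set I : ℝ := ∫ x in (0:ℝ)..θ, F x with hI
  have hI0 : 0 ≤ I := intervalIntegral.integral_nonneg hθ.le (fun x _ => hFnn x)
  set g : ℝ → ℝ := fun x => ‖vφ x‖ ^ 2 with hg
  set g' : ℝ → ℝ := fun x => 2 * (inner ℝ (vφ x) (deriv vφ x) : ℝ) with hg'
  have hd : ∀ x : ℝ, HasDerivAt g (g' x) x := fun x =>
    ((hvφ.differentiable one_ne_zero x).hasDerivAt).norm_sq
  have hdc : Continuous (deriv vφ) := hvφ.continuous_deriv le_rfl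
  have hg'c : Continuous g' :=
    continuous_const.mul (hvφ.continuous.inner hdc)
  have hϑ' : ϑ ∈ Set.Icc (0:ℝ) θ := by
    rcases hϑ with h | h <;> subst h
    · exact ⟨le_rfl, hθ.le⟩
    · exact ⟨hθ.le, le_rfl⟩
  -- pointwise bound on |g'| on [0,θ]
  have hptw : ∀ x ∈ Set.Icc (0:ℝ) θ, |g' x| ≤ a * F x := by
    intro x hx
    have hderiv : deriv vφ x = -(lam + 1) * vr x := hdiv x hx
    have h1 : |(inner ℝ (vφ x) (deriv vφ x) : ℝ)| ≤ ‖vφ x‖ * ‖deriv vφ x‖ :=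
      abs_real_inner_le_norm _ _
    have h2 : ‖deriv vφ x‖ = a * ‖vr x‖ := by
      rw [hderiv, norm_mul, norm_neg]
    rw [hg', abs_mul, abs_two]
    have h3 : |(inner ℝ (vφ x) (deriv vφ x) : ℝ)| ≤ ‖vφ x‖ * (a * ‖vr x‖) := by
      rw [← h2]; exact h1
    simp only [hF]
    nlinarith [h3, sq_nonneg (‖vr x‖ - ‖vφ x‖), norm_nonneg (vr x), norm_nonneg (vφ x),
      abs_nonneg (inner ℝ (vφ x) (deriv vφ x) : ℝ), mul_nonneg ha0 (sq_nonneg (‖vr x‖ - ‖vφ x‖))]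
  -- bound on ∫ |g'|
  have habsint : (∫ x in (0:ℝ)..θ, |g' x|) ≤ a * I := by
    have : (∫ x in (0:ℝ)..θ, |g' x|) ≤ ∫ x in (0:ℝ)..θ, a * F x := by
      apply intervalIntegral.integral_mono_on hθ.le
        (hg'c.abs.intervalIntegrable _ _) ((hFc.const_smul a).intervalIntegrable _ _)
      intro x hx; exact hptw x hx
    rwa [intervalIntegral.integral_const_mul] at this
  -- key estimate
  have key : ∀ φ ∈ Set.Icc (0:ℝ) θ, g ϑ ≤ g φ + a * I := by
    intro φ hφ
    have hftc : g ϑ - g φ = ∫ x in φ..ϑ, g' x :=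
      (intervalIntegral.integral_eq_sub_of_hasDerivAt (fun x _ => hd x)
        (hg'c.intervalIntegrable _ _)).symm
    have h1 : g ϑ - g φ ≤ |∫ x in φ..ϑ, g' x| := hftc ▸ le_abs_self _
    have h2 : |∫ x in φ..ϑ, g' x| ≤ ∫ x in Set.uIoc φ ϑ, |g' x| := by
      simpa using intervalIntegral.norm_integral_le_integral_norm_uIoc (f := g') (a := φ) (b := ϑ)
    have hsub : Set.uIoc φ ϑ ⊆ Set.Ioc (0:ℝ) θ := by
      rw [Set.uIoc]
      exact Set.Ioc_subset_Ioc (le_min hφ.1 hϑ'.1) (max_le hφ.2 hϑ'.2)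
    have h3 : (∫ x in Set.uIoc φ ϑ, |g' x|) ≤ ∫ x in Set.Ioc (0:ℝ) θ, |g' x| := by
      apply setIntegral_mono_set (hg'c.abs.integrableOn_Ioc)
        (Filter.Eventually.of_forall fun x => abs_nonneg _)
        (HasSubset.Subset.eventuallyLE hsub)
    have h4 : (∫ x in Set.Ioc (0:ℝ) θ, |g' x|) = ∫ x in (0:ℝ)..θ, |g' x| :=
      (intervalIntegral.integral_of_le hθ.le).symm
    have h5 : |∫ x in φ..ϑ, g' x| ≤ a * I := by
      calc |∫ x in φ..ϑ, g' x| ≤ ∫ x in Set.uIoc φ ϑ, |g' x| := h2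
        _ ≤ ∫ x in Set.Ioc (0:ℝ) θ, |g' x| := h3
        _ = ∫ x in (0:ℝ)..θ, |g' x| := h4
        _ ≤ a * I := habsint
    linarith
  -- integrate the key estimate
  have hstep : θ * g ϑ ≤ I + θ * (a * I) := by
    have h1 : (∫ _ in (0:ℝ)..θ, g ϑ) = θ * g ϑ := by
      rw [intervalIntegral.integral_const, sub_zero, smul_eq_mul]
    have h2 : (∫ φ in (0:ℝ)..θ, g ϑ) ≤ ∫ φ in (0:ℝ)..θ, (g φ + a * I) := by
      apply intervalIntegral.integral_mono_on hθ.le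
        (intervalIntegrable_const)
        (((hvφ.continuous.norm.pow 2).add continuous_const).intervalIntegrable _ _)
      exact key
    have h3 : (∫ φ in (0:ℝ)..θ, (g φ + a * I)) = (∫ φ in (0:ℝ)..θ, g φ) + θ * (a * I) := by
      rw [intervalIntegral.integral_add (f := g) ((hvφ.continuous.norm.pow 2).intervalIntegrable _ _)
        intervalIntegrable_const, intervalIntegral.integral_const, sub_zero, smul_eq_mul]
    have h4 : (∫ φ in (0:ℝ)..θ, g φ) ≤ I := by
      apply intervalIntegral.integral_mono_on (f := g) hθ.le
        ((hvφ.continuous.norm.pow 2).intervalIntegrable _ _)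
        (hFc.intervalIntegrable _ _)
      intro x _
      have : (0:ℝ) ≤ ‖vr x‖ ^ 2 := by positivity
      simp only [hg, hF]; linarith
    linarith [h1 ▸ h2.trans_eq h3, h4]
  -- conclude
  have hfinal : g ϑ ≤ (θ⁻¹ + a) * I := by
    rw [← mul_le_mul_iff_right₀ hθ]
    calc θ * g ϑ ≤ I + θ * (a * I) := hstep
      _ = θ * ((θ⁻¹ + a) * I) := by field_simp
  calc g ϑ ≤ (θ⁻¹ + a) * I := hfinal
    _ = 1 * (θ⁻¹ + a) * I := by ring
end

section
/- Let D := ⋃_{k∈ℤ} (kπ − π/4, kπ + π/4). There exists a universal constant C > 0 such that for all θ > 0, all α, t ∈ ℝ and all ϑ ∈ [0,θ], writing λ = α + i t, the following holds: if either αθ ∈ ℝ \ D, or (αθ ∈ D and |t|·θ ≥ 1/4), then sin(λθ) ≠ 0 and |cos(λϑ)|² / |sin(λθ)|² ≤ C·e^{−2|t|(θ−ϑ)}. -/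
open Real Set


lemma sq_abs_sin (a b : ℝ) :
    ‖Complex.sin (a + b*Complex.I)‖^2 = Real.sin a ^ 2 + Real.sinh b ^ 2 := by
  rw [Complex.sq_norm, Complex.sin_add, Complex.sin_mul_I, Complex.cos_mul_I, ← mul_assoc]
  simp only [← Complex.ofReal_sin, ← Complex.ofReal_cos, ← Complex.ofReal_sinh,
    ← Complex.ofReal_cosh, ← Complex.ofReal_mul]
  rw [Complex.normSq_add_mul_I]
  nlinarith [Real.sin_sq_add_cos_sq a, Real.cosh_sq b]

lemma sq_abs_cos (a b : ℝ) :
    ‖Complex.cos (a + b*Complex.I)‖^2 = Real.cos a ^ 2 + Real.sinh b ^ 2 := by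
  rw [Complex.sq_norm, Complex.cos_add, Complex.sin_mul_I, Complex.cos_mul_I, ← mul_assoc]
  simp only [← Complex.ofReal_sin, ← Complex.ofReal_cos, ← Complex.ofReal_sinh,
    ← Complex.ofReal_cosh, ← Complex.ofReal_mul]
  rw [show (↑(cos a * cosh b) - ↑(sin a * sinh b) * Complex.I : ℂ)
      = ↑(cos a * cosh b) + ↑(-(sin a * sinh b)) * Complex.I by push_cast; ring,
    Complex.normSq_add_mul_I]
  nlinarith [Real.sin_sq_add_cos_sq a, Real.cosh_sq b]

lemma sinh_ge_exp_div_six {s : ℝ} (hs : 1/4 ≤ s) : Real.exp s / 6 ≤ Real.sinh s := by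
  have h12 : (3/2:ℝ) ≤ Real.exp (1/2) := by
    have hsq : Real.exp (1/2) ^ 2 = Real.exp 1 := by
      rw [sq, ← Real.exp_add]; norm_num
    nlinarith [Real.exp_pos (1/2:ℝ), Real.exp_one_gt_d9]
  have h1 : Real.exp (-s) ≤ (2/3) * Real.exp s := by
    have e1 : Real.exp (-s) = Real.exp s * Real.exp (-(2*s)) := by
      rw [← Real.exp_add]; ring_nf
    have e2 : Real.exp (-(2*s)) ≤ Real.exp (-(1/2:ℝ)) :=
      Real.exp_le_exp.mpr (by linarith)
    have e3 : Real.exp (-(1/2:ℝ)) ≤ 2/3 := by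
      rw [Real.exp_neg]
      rw [inv_le_comm₀ (Real.exp_pos _) (by norm_num)]  -- might fail, fix later
      linarith
    nlinarith [Real.exp_pos s]
  rw [Real.sinh_eq]
  linarith

lemma cosh_le_exp_abs (x : ℝ) : Real.cosh x ≤ Real.exp |x| := by
  rw [Real.cosh_eq]
  have h1 : Real.exp x ≤ Real.exp |x| := Real.exp_le_exp.mpr (le_abs_self x)
  have h2 : Real.exp (-x) ≤ Real.exp |x| := Real.exp_le_exp.mpr (neg_le_abs x)
  linarith

lemma sin_sq_half {x : ℝ}
    (hx : x ∉ ⋃ k : ℤ, Ioo ((k:ℝ)*π - π/4) ((k:ℝ)*π + π/4)) :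
    1/2 ≤ Real.sin x ^ 2 := by
  simp only [Set.mem_iUnion, Set.mem_Ioo, not_exists, not_and, not_lt] at hx
  have hπ := Real.pi_pos
  set k : ℤ := round (x/π) with hk
  set y : ℝ := x - k*π with hy
  have h1 : |y| ≤ π/2 := by
    have h := abs_sub_round (x/π)
    have : |y| = |x/π - (k:ℝ)| * π := by
      have hyy : (x/π - (k:ℝ)) * π = y := by
        rw [sub_mul, div_mul_cancel₀ _ (ne_of_gt hπ), hy]
      rw [← hyy, abs_mul, abs_of_pos hπ]
    rw [this]
    nlinarith
  have h2 : π/4 ≤ |y| := by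
    rcases le_or_gt x ((k:ℝ)*π - π/4) with h | h
    · rw [abs_sub_comm, abs_of_nonneg (by linarith)] ; linarith
    · have := hx k h
      rw [abs_of_nonneg (by linarith [hx k h])]
      linarith
  have hsx : Real.sin x = Real.cos ((k:ℝ)*π) * Real.sin y := by
    have hxe : x = (k:ℝ)*π + y := by rw [hy]; ring
    rw [hxe, Real.sin_add, Real.sin_int_mul_pi]; ring
  have hck : Real.cos ((k:ℝ)*π) ^ 2 = 1 := by
    have := Real.sin_sq_add_cos_sq ((k:ℝ)*π)
    have h0 := Real.sin_int_mul_pi k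
    nlinarith
  have hsy : Real.sin x ^ 2 = Real.sin |y| ^ 2 := by
    rcases abs_cases y with ⟨h, _⟩ | ⟨h, _⟩
    · rw [h, hsx, mul_pow, hck, one_mul]
    · rw [h, Real.sin_neg, hsx, mul_pow, hck, one_mul]; ring
  have hmono : Real.sin (π/4) ≤ Real.sin |y| := by
    apply Real.strictMonoOn_sin.monotoneOn
    · constructor <;> [linarith; linarith]
    · constructor <;> [linarith [abs_nonneg y]; linarith]
    · exact h2
  rw [hsy]
  have h4 : Real.sin (π/4) = Real.sqrt 2 / 2 := Real.sin_pi_div_four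
  have : (Real.sqrt 2 / 2)^2 = 1/2 := by
    rw [div_pow, Real.sq_sqrt (by norm_num : (2:ℝ) ≥ 0)]; norm_num
  nlinarith [Real.sqrt_nonneg 2]


/-- Exponential decay estimate for the quotient `|cos(λϑ)|²/|sin(λθ)|²` with `λ = α + it`,
uniformly in the opening angle `θ`, where `D` is the set of reals at distance less than
`π/4` from `πℤ`. -/
theorem cos_sin_quotient_decay :
    ∃ C : ℝ, 0 < C ∧ ∀ θ : ℝ, 0 < θ → ∀ α t ϑ : ℝ, ϑ ∈ Icc (0:ℝ) θ →
      (α * θ ∉ (⋃ k : ℤ, Ioo ((k : ℝ) * π - π/4) ((k : ℝ) * π + π/4)) ∨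
        (α * θ ∈ (⋃ k : ℤ, Ioo ((k : ℝ) * π - π/4) ((k : ℝ) * π + π/4)) ∧
          1/4 ≤ |t| * θ)) →
      Complex.sin (((α : ℂ) + t * Complex.I) * θ) ≠ 0 ∧
      (‖Complex.cos (((α : ℂ) + t * Complex.I) * (ϑ : ℂ))‖)^2 /
          (‖Complex.sin (((α : ℂ) + t * Complex.I) * (θ : ℂ))‖)^2
        ≤ C * Real.exp (-2 * |t| * (θ - ϑ)) := by
  refine ⟨36, by norm_num, fun θ hθ α t ϑ hϑ h => ?_⟩
  obtain ⟨hϑ0, hϑθ⟩ := hϑ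
  have ht0 : (0:ℝ) ≤ |t| := abs_nonneg t
  -- rewrite the complex absolute values
  have hS : (‖Complex.sin (((α : ℂ) + t * Complex.I) * (θ : ℂ))‖)^2
      = Real.sin (α*θ) ^ 2 + Real.sinh (t*θ) ^ 2 := by
    rw [show ((α : ℂ) + t * Complex.I) * (θ : ℂ)
        = ((α*θ : ℝ) : ℂ) + ((t*θ : ℝ) : ℂ) * Complex.I by push_cast; ring]
    exact sq_abs_sin _ _
  have hC : (‖Complex.cos (((α : ℂ) + t * Complex.I) * (ϑ : ℂ))‖)^2
      = Real.cos (α*ϑ) ^ 2 + Real.sinh (t*ϑ) ^ 2 := by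
    rw [show ((α : ℂ) + t * Complex.I) * (ϑ : ℂ)
        = ((α*ϑ : ℝ) : ℂ) + ((t*ϑ : ℝ) : ℂ) * Complex.I by push_cast; ring]
    exact sq_abs_cos _ _
  -- sinh squared in terms of |t|
  have hsinh_sq : Real.sinh (t*θ) ^ 2 = Real.sinh (|t| * θ) ^ 2 := by
    rcases abs_cases t with ⟨h1, _⟩ | ⟨h1, _⟩
    · rw [h1]
    · rw [h1, show -t*θ = -(t*θ) by ring, Real.sinh_neg]; ring
  -- denominator lower bound
  have hden : Real.exp (|t| * θ) ^ 2 / 36 ≤ Real.sin (α*θ) ^ 2 + Real.sinh (t*θ) ^ 2 := by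
    rw [hsinh_sq]
    set u := |t| * θ with hu
    have hu0 : 0 ≤ u := mul_nonneg ht0 hθ.le
    have he2 : Real.exp u ^ 2 = Real.exp (2*u) := by rw [sq, ← Real.exp_add]; ring_nf
    rcases h with hx | ⟨_, hx⟩
    · have h12 := sin_sq_half hx
      have hch : Real.exp (2*u) / 2 ≤ Real.cosh (2*u) := by
        rw [Real.cosh_eq]; nlinarith [Real.exp_pos (-(2*u))]
      have := Real.cosh_two_mul u
      have := Real.cosh_sq u
      nlinarith
    · have hs := sinh_ge_exp_div_six hx
      have hsq : (Real.exp u / 6) ^ 2 ≤ Real.sinh u ^ 2 :=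
        pow_le_pow_left₀ (by positivity) hs 2
      nlinarith [sq_nonneg (Real.sin (α*θ))]
  have hdenpos : 0 < Real.exp (|t| * θ) ^ 2 / 36 := by positivity
  -- numerator upper bound
  have hnum : Real.cos (α*ϑ) ^ 2 + Real.sinh (t*ϑ) ^ 2 ≤ Real.exp (|t| * ϑ) ^ 2 := by
    have hce : Real.cosh (t*ϑ) ≤ Real.exp (|t| * ϑ) := by
      calc Real.cosh (t*ϑ) ≤ Real.exp |t*ϑ| := cosh_le_exp_abs _
        _ = Real.exp (|t| * ϑ) := by rw [abs_mul, abs_of_nonneg hϑ0]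
    nlinarith [Real.cosh_sq (t*ϑ), Real.cosh_pos (t*ϑ), Real.sin_sq_add_cos_sq (α*ϑ),
      sq_nonneg (Real.sin (α*ϑ))]
  constructor
  · intro h0
    rw [show ((α : ℂ) + t * Complex.I) * (θ:ℂ) = ((α : ℂ) + t * Complex.I) * (θ : ℂ) from rfl] at h0
    have : (‖Complex.sin (((α : ℂ) + t * Complex.I) * (θ : ℂ))‖)^2 = 0 := by
      rw [h0]; simp
    rw [hS] at this
    nlinarith [hden, hdenpos]
  · rw [hS, hC]
    calc (Real.cos (α*ϑ) ^ 2 + Real.sinh (t*ϑ) ^ 2) /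
          (Real.sin (α*θ) ^ 2 + Real.sinh (t*θ) ^ 2)
        ≤ Real.exp (|t| * ϑ) ^ 2 / (Real.exp (|t| * θ) ^ 2 / 36) :=
          div_le_div₀ (by positivity) hnum hdenpos hden
      _ = 36 * (Real.exp (|t| * ϑ) ^ 2 / Real.exp (|t| * θ) ^ 2) := by ring
      _ = 36 * (Real.exp (2*(|t| * ϑ)) / Real.exp (2*(|t| * θ))) := by
          rw [sq, sq, ← Real.exp_add, ← Real.exp_add]; ring_nf
      _ = 36 * Real.exp (2*(|t| * ϑ) - 2*(|t| * θ)) := by rw [Real.exp_sub]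
      _ = 36 * Real.exp (-2 * |t| * (θ - ϑ)) := by ring_nf
end

section
/- For every ε ∈ (0,1) there exists a constant C > 0, depending only on ε, such that for all θ ∈ (0,π), all λ = α + i t ∈ ℂ with 1 − (1−ε)π/θ ≤ α ≤ (1−ε)π/θ − 1 and |t|·θ ≥ 1, and all φ ∈ [0,θ], the quantities λ sin((λ+1)θ) and λ sin((λ−1)θ) are nonzero and |sin((λ+1)φ)/(4λ sin((λ+1)θ)) − sin((λ−1)φ)/(4λ sin((λ−1)θ))| ≤ (C/|λ|)·( e^{−|t|(θ+φ)}·|sin(θ+φ)| + e^{−|t|(θ−φ)}·|sin(θ−φ)| ). -/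
open Real

lemma gbpd_abs_sin_le (z : ℂ) : ‖Complex.sin z‖ ≤ Real.exp |z.im| := by
  rw [Complex.sin, norm_div, norm_mul, Complex.norm_I, (by norm_num : ‖(2:ℂ)‖ = 2), mul_one]
  rw [div_le_iff₀ (by norm_num : (0:ℝ) < 2)]
  have h1 : ‖Complex.exp (-z * Complex.I) - Complex.exp (z * Complex.I)‖
      ≤ ‖Complex.exp (-z * Complex.I)‖ + ‖Complex.exp (z * Complex.I)‖ := by
    simpa using norm_sub_le _ _
  have h2 : ‖Complex.exp (-z * Complex.I)‖ = Real.exp z.im := by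
    rw [Complex.norm_exp]; congr 1; simp [Complex.mul_re]
  have h3 : ‖Complex.exp (z * Complex.I)‖ = Real.exp (-z.im) := by
    rw [Complex.norm_exp]; congr 1; simp [Complex.mul_re]
  rw [h2, h3] at h1
  have h4 : Real.exp z.im ≤ Real.exp |z.im| := Real.exp_le_exp.2 (le_abs_self _)
  have h5 : Real.exp (-z.im) ≤ Real.exp |z.im| := Real.exp_le_exp.2 (neg_le_abs _)
  linarith

lemma gbpd_le_abs_sin (z : ℂ) :
    (Real.exp |z.im| - Real.exp (-|z.im|)) / 2 ≤ ‖Complex.sin z‖ := by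
  rw [Complex.sin, norm_div, norm_mul, Complex.norm_I, (by norm_num : ‖(2:ℂ)‖ = 2), mul_one]
  gcongr
  have h1 : |‖Complex.exp (-z * Complex.I)‖ - ‖Complex.exp (z * Complex.I)‖|
      ≤ ‖Complex.exp (-z * Complex.I) - Complex.exp (z * Complex.I)‖ :=
    abs_norm_sub_norm_le _ _
  have h2 : ‖Complex.exp (-z * Complex.I)‖ = Real.exp z.im := by
    rw [Complex.norm_exp]; congr 1; simp [Complex.mul_re]
  have h3 : ‖Complex.exp (z * Complex.I)‖ = Real.exp (-z.im) := by
    rw [Complex.norm_exp]; congr 1; simp [Complex.mul_re]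
  rw [h2, h3] at h1
  refine le_trans ?_ h1
  rcases le_or_gt 0 z.im with h | h
  · rw [abs_of_nonneg h]
    have : Real.exp (-z.im) ≤ Real.exp z.im := Real.exp_le_exp.2 (by linarith)
    rw [abs_of_nonneg (by linarith)]
  · rw [abs_of_neg h]
    have : Real.exp z.im ≤ Real.exp (-z.im) := Real.exp_le_exp.2 (by linarith)
    rw [abs_of_nonpos (by linarith)]; ring_nf; rfl

lemma gbpd_id (lam a b : ℂ) :
    Complex.sin ((lam+1)*b) * Complex.sin ((lam-1)*a)
      - Complex.sin ((lam-1)*b) * Complex.sin ((lam+1)*a)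
    = Complex.sin (lam*(a-b)) * Complex.sin (a+b)
      - Complex.sin (lam*(a+b)) * Complex.sin (a-b) := by
  have e1 : (lam+1)*b = lam*b + b := by ring
  have e2 : (lam-1)*b = lam*b - b := by ring
  have e3 : (lam+1)*a = lam*a + a := by ring
  have e4 : (lam-1)*a = lam*a - a := by ring
  have e5 : lam*(a-b) = lam*a - lam*b := by ring
  have e6 : lam*(a+b) = lam*a + lam*b := by ring
  rw [e1, e2, e3, e4, e5, e6, Complex.sin_add, Complex.sin_sub, Complex.sin_add,
    Complex.sin_sub, Complex.sin_sub, Complex.sin_add, Complex.sin_add, Complex.sin_sub]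
  ring

/-- Pointwise exponential decay bound for the boundary derivative `∂_{φ'}G(λ,φ,θ)` of the
fourth-order Green's function, for `Re λ ∈ I_ε` and `|Im λ|θ ≥ 1`. -/
theorem green_boundary_pointwise_decay (ε : ℝ) (hε : ε ∈ Set.Ioo (0:ℝ) 1) :
    ∃ C : ℝ, 0 < C ∧ ∀ θ : ℝ, θ ∈ Set.Ioo (0:ℝ) π → ∀ lam : ℂ,
      1 - (1 - ε) * π / θ ≤ lam.re → lam.re ≤ (1 - ε) * π / θ - 1 →
      1 ≤ |lam.im| * θ → ∀ φ ∈ Set.Icc (0:ℝ) θ,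
      lam * Complex.sin ((lam + 1) * θ) ≠ 0 ∧
      lam * Complex.sin ((lam - 1) * θ) ≠ 0 ∧
      ‖Complex.sin ((lam + 1) * (φ : ℂ)) / (4 * lam * Complex.sin ((lam + 1) * θ))
          - Complex.sin ((lam - 1) * (φ : ℂ)) / (4 * lam * Complex.sin ((lam - 1) * θ))‖
        ≤ (C / ‖lam‖) *
          (Real.exp (-|lam.im| * (θ + φ)) * |Real.sin (θ + φ)| +
           Real.exp (-|lam.im| * (θ - φ)) * |Real.sin (θ - φ)|) := by
  have hu : (0:ℝ) < 1 - Real.exp (-2) := by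
    have : Real.exp (-2) < 1 := Real.exp_lt_one_iff.2 (by norm_num)
    linarith
  set u : ℝ := 1 - Real.exp (-2) with hu_def
  refine ⟨u⁻¹ ^ 2, pow_pos (inv_pos.2 hu) 2, ?_⟩
  intro θ hθ lam _ _ ht φ hφ
  obtain ⟨hθ0, hθπ⟩ := hθ
  obtain ⟨hφ0, hφθ⟩ := hφ
  have htpos : 0 < |lam.im| := by nlinarith [abs_nonneg lam.im]
  have hlam : lam ≠ 0 := by
    intro h
    rw [h] at htpos; simp at htpos
  have hM : 0 < ‖lam‖ := by simpa using htpos.trans_le (Complex.abs_im_le_norm lam)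
  set P : ℝ := Real.exp (|lam.im| * θ) with hP_def
  have hP : 0 < P := Real.exp_pos _
  -- lower bound for the two denominators
  have hlow : ∀ z : ℂ, z.im = lam.im * θ →
      u / 2 * P ≤ ‖Complex.sin z‖ := by
    intro z hz
    have h1 : |z.im| = |lam.im| * θ := by
      rw [hz, abs_mul, abs_of_pos hθ0]
    have h2 := gbpd_le_abs_sin z
    rw [h1] at h2
    refine le_trans ?_ h2
    have h3 : Real.exp (-(|lam.im| * θ)) ≤ Real.exp (-2) * P := by
      rw [hP_def, ← Real.exp_add]
      exact Real.exp_le_exp.2 (by linarith)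
    rw [hu_def]
    linarith
  have him1 : ((lam + 1) * (θ:ℂ)).im = lam.im * θ := by simp [Complex.mul_im]
  have him2 : ((lam - 1) * (θ:ℂ)).im = lam.im * θ := by simp [Complex.mul_im]
  have hS1 := hlow _ him1
  have hS2 := hlow _ him2
  have hS1pos : 0 < ‖Complex.sin ((lam + 1) * (θ:ℂ))‖ :=
    lt_of_lt_of_le (by positivity) hS1
  have hS2pos : 0 < ‖Complex.sin ((lam - 1) * (θ:ℂ))‖ :=
    lt_of_lt_of_le (by positivity) hS2
  have hS1ne : Complex.sin ((lam + 1) * (θ:ℂ)) ≠ 0 := by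
    intro h; rw [h] at hS1pos; simp at hS1pos
  have hS2ne : Complex.sin ((lam - 1) * (θ:ℂ)) ≠ 0 := by
    intro h; rw [h] at hS2pos; simp at hS2pos
  refine ⟨mul_ne_zero hlam hS1ne, mul_ne_zero hlam hS2ne, ?_⟩
  -- rewrite the difference as a single fraction with the Green's function numerator
  have hid : Complex.sin ((lam + 1) * (φ : ℂ)) / (4 * lam * Complex.sin ((lam + 1) * θ))
      - Complex.sin ((lam - 1) * (φ : ℂ)) / (4 * lam * Complex.sin ((lam - 1) * θ))
      = (Complex.sin (lam * ((θ:ℂ) - φ)) * Complex.sin ((θ:ℂ) + φ)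
          - Complex.sin (lam * ((θ:ℂ) + φ)) * Complex.sin ((θ:ℂ) - φ))
        / (4 * lam * Complex.sin ((lam + 1) * θ) * Complex.sin ((lam - 1) * θ)) := by
    rw [← gbpd_id lam (θ:ℂ) (φ:ℂ)]
    have hA : 4 * lam * Complex.sin ((lam + 1) * θ) ≠ 0 :=
      mul_ne_zero (mul_ne_zero (by norm_num : (4:ℂ) ≠ 0) hlam) hS1ne
    have hB : 4 * lam * Complex.sin ((lam - 1) * θ) ≠ 0 :=
      mul_ne_zero (mul_ne_zero (by norm_num : (4:ℂ) ≠ 0) hlam) hS2ne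
    rw [div_sub_div _ _ hA hB, div_eq_div_iff (mul_ne_zero hA hB) (mul_ne_zero hA hS2ne)]
    ring
  rw [hid, norm_div]
  -- bound numerator
  have hnum : ‖Complex.sin (lam * ((θ:ℂ) - φ)) * Complex.sin ((θ:ℂ) + φ)
        - Complex.sin (lam * ((θ:ℂ) + φ)) * Complex.sin ((θ:ℂ) - φ)‖
      ≤ Real.exp (|lam.im| * (θ - φ)) * |Real.sin (θ + φ)|
        + Real.exp (|lam.im| * (θ + φ)) * |Real.sin (θ - φ)| := by
    have e1 : ((θ:ℂ) + φ) = ((θ + φ : ℝ) : ℂ) := by push_cast; ring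
    have e2 : ((θ:ℂ) - φ) = ((θ - φ : ℝ) : ℂ) := by push_cast; ring
    have a1 : ‖Complex.sin ((θ:ℂ) + φ)‖ = |Real.sin (θ + φ)| := by
      rw [e1, ← Complex.ofReal_sin, Complex.norm_real, Real.norm_eq_abs]
    have a2 : ‖Complex.sin ((θ:ℂ) - φ)‖ = |Real.sin (θ - φ)| := by
      rw [e2, ← Complex.ofReal_sin, Complex.norm_real, Real.norm_eq_abs]
    have b1 : ‖Complex.sin (lam * ((θ:ℂ) - φ))‖ ≤ Real.exp (|lam.im| * (θ - φ)) := by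
      refine le_trans (gbpd_abs_sin_le _) (Real.exp_le_exp.2 ?_)
      rw [e2]
      have : (lam * ((θ - φ : ℝ) : ℂ)).im = lam.im * (θ - φ) := by simp [Complex.mul_im]
      rw [this, abs_mul, abs_of_nonneg (by linarith : (0:ℝ) ≤ θ - φ)]
    have b2 : ‖Complex.sin (lam * ((θ:ℂ) + φ))‖ ≤ Real.exp (|lam.im| * (θ + φ)) := by
      refine le_trans (gbpd_abs_sin_le _) (Real.exp_le_exp.2 ?_)
      rw [e1]
      have : (lam * ((θ + φ : ℝ) : ℂ)).im = lam.im * (θ + φ) := by simp [Complex.mul_im]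
      rw [this, abs_mul, abs_of_nonneg (by linarith : (0:ℝ) ≤ θ + φ)]
    calc ‖Complex.sin (lam * ((θ:ℂ) - φ)) * Complex.sin ((θ:ℂ) + φ)
          - Complex.sin (lam * ((θ:ℂ) + φ)) * Complex.sin ((θ:ℂ) - φ)‖
        ≤ ‖Complex.sin (lam * ((θ:ℂ) - φ))‖ * ‖Complex.sin ((θ:ℂ) + φ)‖
          + ‖Complex.sin (lam * ((θ:ℂ) + φ))‖ * ‖Complex.sin ((θ:ℂ) - φ)‖ := by
          refine le_trans (norm_sub_le _ _) ?_
          rw [norm_mul, norm_mul]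
      _ ≤ _ := by
          rw [a1, a2]
          gcongr
  -- bound denominator from below
  have hden : 4 * ‖lam‖ * (u / 2 * P) * (u / 2 * P)
      ≤ ‖4 * lam * Complex.sin ((lam + 1) * θ) * Complex.sin ((lam - 1) * θ)‖ := by
    rw [norm_mul, norm_mul, norm_mul]
    have h4 : ‖(4 : ℂ)‖ = 4 := by norm_num
    rw [h4]
    have hc : 0 < u / 2 * P := by positivity
    gcongr
  have hdenpos : 0 < 4 * ‖lam‖ * (u / 2 * P) * (u / 2 * P) := by positivity
  calc ‖Complex.sin (lam * ((θ:ℂ) - φ)) * Complex.sin ((θ:ℂ) + φ)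
          - Complex.sin (lam * ((θ:ℂ) + φ)) * Complex.sin ((θ:ℂ) - φ)‖
        / ‖4 * lam * Complex.sin ((lam + 1) * θ) * Complex.sin ((lam - 1) * θ)‖
      ≤ (Real.exp (|lam.im| * (θ - φ)) * |Real.sin (θ + φ)|
          + Real.exp (|lam.im| * (θ + φ)) * |Real.sin (θ - φ)|)
        / (4 * ‖lam‖ * (u / 2 * P) * (u / 2 * P)) := by
        apply div_le_div₀ (by positivity) hnum hdenpos hden
    _ = (u⁻¹ ^ 2 / ‖lam‖) *
          (Real.exp (-|lam.im| * (θ + φ)) * |Real.sin (θ + φ)| +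
           Real.exp (-|lam.im| * (θ - φ)) * |Real.sin (θ - φ)|) := by
        have hP1 : Real.exp (|lam.im| * (θ - φ)) = P * P * Real.exp (-|lam.im| * (θ + φ)) := by
          rw [hP_def, ← Real.exp_add, ← Real.exp_add]
          congr 1; ring
        have hP2 : Real.exp (|lam.im| * (θ + φ)) = P * P * Real.exp (-|lam.im| * (θ - φ)) := by
          rw [hP_def, ← Real.exp_add, ← Real.exp_add]
          congr 1; ring
        rw [hP1, hP2]
        field_simp
        ring
end
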